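/- Accumulated approximation error for the dual upper bound: let M₁ and M₂ be two processes of square-integrable real random variables with M₁₀ = M₂₀ and suppose ε > 0 satisfies (𝔼|ξ_n(M₁) − ξ_n(M₂)|²)^{1/2} ≤ ε for every 0 ≤ n ≤ N−1. If each G_n is square-integrable, then for every 0 ≤ n ≤ N, 𝔼|Ũ_n(M₁) − Ũ_n(M₂)| ≤ (N − n)·ε. -/

import Mathlib

open MeasureTheory

/-- The dual upper-bound process `Ũ_n(M)(ω) = max_{n ≤ m ≤ N} (G m ω − M m ω + M n ω)`. -/
noncomputable def dualU {Ω : Type*} (N : ℕ) (G M : ℕ → Ω → ℝ) (n : ℕ) (hn : n ≤ N)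
    (ω : Ω) : ℝ :=
  (Finset.Icc n N).sup' (Finset.nonempty_Icc.mpr hn) fun m => G m ω - M m ω + M n ω

private lemma telescope_Ico (f : ℕ → ℝ) : ∀ m n : ℕ, n ≤ m →
    f m - f n = ∑ k ∈ Finset.Ico n m, (f (k + 1) - f k) := by
  intro m
  induction m with
  | zero => intro n hn; interval_cases n; simp
  | succ m ih =>
    intro n hn
    rcases Nat.lt_or_ge n (m + 1) with h | h
    · have hnm : n ≤ m := Nat.lt_succ_iff.mp h
      rw [Finset.sum_Ico_succ_top hnm, ← ih n hnm]; ring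
    · have : n = m + 1 := le_antisymm hn h
      subst this; simp

private lemma aesm_sup' {ι Ω : Type*} [MeasurableSpace Ω] {μ : Measure Ω}
    (s : Finset ι) (hs : s.Nonempty) (F : ι → Ω → ℝ)
    (hF : ∀ i ∈ s, AEStronglyMeasurable (F i) μ) :
    AEStronglyMeasurable (fun ω => s.sup' hs fun i => F i ω) μ := by
  induction s using Finset.cons_induction with
  | empty => exact absurd hs (by simp)
  | cons a s ha ih =>
    rcases s.eq_empty_or_nonempty with rfl | hs'
    · simpa using hF a (by simp)
    · simp only [Finset.sup'_cons hs']
      exact (hF a (Finset.mem_cons_self a s)).sup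
        (ih hs' fun i hi => hF i (Finset.mem_cons_of_mem hi))

private lemma l1_le_sqrt_l2 {Ω : Type*} [MeasurableSpace Ω] (μ : Measure Ω)
    [IsProbabilityMeasure μ] (f : Ω → ℝ) (hf : MemLp f 2 μ) :
    ∫ ω, |f ω| ∂μ ≤ Real.sqrt (∫ ω, |f ω| ^ 2 ∂μ) := by
  have hpq : (2 : ℝ).HolderConjugate 2 := by
    rw [Real.holderConjugate_iff_eq_conjExponent (by norm_num)]; norm_num
  have habs : MemLp (fun ω => |f ω|) (ENNReal.ofReal 2) μ := by
    rw [ENNReal.ofReal_ofNat]; exact hf.abs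
  have hone : MemLp (fun _ : Ω => (1 : ℝ)) (ENNReal.ofReal 2) μ := memLp_const 1
  have h := integral_mul_le_Lp_mul_Lq_of_nonneg hpq
    (f := fun ω => |f ω|) (g := fun _ => (1 : ℝ))
    (Filter.Eventually.of_forall fun ω => abs_nonneg _)
    (Filter.Eventually.of_forall fun _ => zero_le_one) habs hone
  simp only [mul_one, Real.one_rpow, integral_const, measure_univ, probReal_univ,
    ENNReal.toReal_one, one_smul, Real.one_rpow] at h
  have h2 : ∀ a : Ω, |f a| ^ (2 : ℝ) = |f a| ^ (2 : ℕ) := fun a => by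
    rw [← Real.rpow_natCast |f a| 2]; norm_num
  simp only [h2] at h
  rw [Real.sqrt_eq_rpow]
  exact h

theorem accumulated_dual_error
    {Ω : Type*} [MeasurableSpace Ω] (μ : Measure Ω) [IsProbabilityMeasure μ]
    (N : ℕ) (hN : 1 ≤ N) (G M₁ M₂ : ℕ → Ω → ℝ)
    (hG : ∀ n, n ≤ N → MemLp (G n) 2 μ)
    (hM₁ : ∀ n, n ≤ N → MemLp (M₁ n) 2 μ)
    (hM₂ : ∀ n, n ≤ N → MemLp (M₂ n) 2 μ)
    (hM0 : ∀ ω, M₁ 0 ω = M₂ 0 ω)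
    (ε : ℝ) (hε : 0 < ε)
    (hξ : ∀ n, n < N →
      Real.sqrt (∫ ω, |(M₁ (n + 1) ω - M₁ n ω) - (M₂ (n + 1) ω - M₂ n ω)| ^ 2 ∂μ) ≤ ε)
    (n : ℕ) (hn : n ≤ N) :
    ∫ ω, |dualU N G M₁ n hn ω - dualU N G M₂ n hn ω| ∂μ ≤ ((N - n : ℕ) : ℝ) * ε := by
  -- the pointwise dominating function
  set D : ℕ → Ω → ℝ := fun k ω => |(M₁ (k + 1) ω - M₁ k ω) - (M₂ (k + 1) ω - M₂ k ω)| with hD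
  -- pointwise bound
  have hpt : ∀ ω, |dualU N G M₁ n hn ω - dualU N G M₂ n hn ω| ≤
      ∑ k ∈ Finset.Ico n N, D k ω := by
    intro ω
    set C := ∑ k ∈ Finset.Ico n N, D k ω with hC
    have hCnn : ∀ m, n ≤ m → m ≤ N →
        |(M₂ m ω - M₂ n ω) - (M₁ m ω - M₁ n ω)| ≤ C := by
      intro m hnm hmN
      have h1 : M₂ m ω - M₂ n ω = ∑ k ∈ Finset.Ico n m, (M₂ (k + 1) ω - M₂ k ω) :=
        telescope_Ico (fun k => M₂ k ω) m n hnm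
      have h2 : M₁ m ω - M₁ n ω = ∑ k ∈ Finset.Ico n m, (M₁ (k + 1) ω - M₁ k ω) :=
        telescope_Ico (fun k => M₁ k ω) m n hnm
      rw [h1, h2, ← Finset.sum_sub_distrib]
      calc |∑ k ∈ Finset.Ico n m, ((M₂ (k + 1) ω - M₂ k ω) - (M₁ (k + 1) ω - M₁ k ω))|
          ≤ ∑ k ∈ Finset.Ico n m, |(M₂ (k + 1) ω - M₂ k ω) - (M₁ (k + 1) ω - M₁ k ω)| :=
            Finset.abs_sum_le_sum_abs _ _
        _ = ∑ k ∈ Finset.Ico n m, D k ω := by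
            refine Finset.sum_congr rfl fun k _ => ?_
            rw [abs_sub_comm]
        _ ≤ C := Finset.sum_le_sum_of_subset_of_nonneg
            (Finset.Ico_subset_Ico le_rfl hmN)
            (fun k _ _ => abs_nonneg _)
    -- bound sup' differences
    have key : ∀ (A B : ℕ → Ω → ℝ),
        (∀ m, n ≤ m → m ≤ N → (B m ω - B n ω) - (A m ω - A n ω) ≤ C) →
        dualU N G A n hn ω ≤ dualU N G B n hn ω + C := by
      intro A B hAB
      unfold dualU
      apply Finset.sup'_le
      intro m hm
      rw [Finset.mem_Icc] at hm
      have := Finset.le_sup' (fun m => G m ω - B m ω + B n ω)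
        (Finset.mem_Icc.mpr hm)
      have h3 := hAB m hm.1 hm.2
      linarith
    have hCge : ∀ m, n ≤ m → m ≤ N →
        (M₂ m ω - M₂ n ω) - (M₁ m ω - M₁ n ω) ≤ C := fun m h1 h2 =>
      le_trans (le_abs_self _) (hCnn m h1 h2)
    have hCge' : ∀ m, n ≤ m → m ≤ N →
        (M₁ m ω - M₁ n ω) - (M₂ m ω - M₂ n ω) ≤ C := fun m h1 h2 => by
      have := hCnn m h1 h2
      have := neg_abs_le ((M₂ m ω - M₂ n ω) - (M₁ m ω - M₁ n ω))
      linarith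
    have hb1 := key M₁ M₂ hCge
    have hb2 := key M₂ M₁ hCge'
    rw [abs_sub_le_iff]
    constructor <;> linarith
  -- integrability of D k and bounds
  have hDmem : ∀ k, k < N → MemLp (D k) 2 μ := by
    intro k hk
    exact (((hM₁ (k + 1) hk).sub (hM₁ k hk.le)).sub
      ((hM₂ (k + 1) hk).sub (hM₂ k hk.le))).abs
  have hDint : ∀ k ∈ Finset.Ico n N, Integrable (D k) μ := by
    intro k hk
    rw [Finset.mem_Ico] at hk
    exact (hDmem k hk.2).integrable (by norm_num)
  have hSint : Integrable (fun ω => ∑ k ∈ Finset.Ico n N, D k ω) μ :=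
    integrable_finset_sum _ hDint
  -- measurability of the dualU difference
  have haesm : AEStronglyMeasurable
      (fun ω => dualU N G M₁ n hn ω - dualU N G M₂ n hn ω) μ := by
    have h1 : AEStronglyMeasurable (fun ω => dualU N G M₁ n hn ω) μ := by
      apply aesm_sup'
      intro m hm
      rw [Finset.mem_Icc] at hm
      exact (((hG m hm.2).aestronglyMeasurable.sub
        (hM₁ m hm.2).aestronglyMeasurable).add (hM₁ n hn).aestronglyMeasurable)
    have h2 : AEStronglyMeasurable (fun ω => dualU N G M₂ n hn ω) μ := by
      apply aesm_sup'
      intro m hm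
      rw [Finset.mem_Icc] at hm
      exact (((hG m hm.2).aestronglyMeasurable.sub
        (hM₂ m hm.2).aestronglyMeasurable).add (hM₂ n hn).aestronglyMeasurable)
    exact h1.sub h2
  have hint : Integrable (fun ω => dualU N G M₁ n hn ω - dualU N G M₂ n hn ω) μ := by
    refine hSint.mono' haesm (Filter.Eventually.of_forall fun ω => ?_)
    simpa [Real.norm_eq_abs] using hpt ω
  calc ∫ ω, |dualU N G M₁ n hn ω - dualU N G M₂ n hn ω| ∂μ
      ≤ ∫ ω, ∑ k ∈ Finset.Ico n N, D k ω ∂μ := by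
        refine integral_mono hint.abs hSint ?_
        intro ω; exact hpt ω
    _ = ∑ k ∈ Finset.Ico n N, ∫ ω, D k ω ∂μ := integral_finset_sum _ hDint
    _ ≤ ∑ k ∈ Finset.Ico n N, ε := by
        refine Finset.sum_le_sum fun k hk => ?_
        rw [Finset.mem_Ico] at hk
        have hk2 := hk.2
        have hmem : MemLp (fun ω => (M₁ (k + 1) ω - M₁ k ω) - (M₂ (k + 1) ω - M₂ k ω)) 2 μ :=
          ((hM₁ (k + 1) hk2).sub (hM₁ k hk2.le)).sub ((hM₂ (k + 1) hk2).sub (hM₂ k hk2.le))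
        calc ∫ ω, D k ω ∂μ
            ≤ Real.sqrt (∫ ω, |(M₁ (k + 1) ω - M₁ k ω) - (M₂ (k + 1) ω - M₂ k ω)| ^ 2 ∂μ) :=
              l1_le_sqrt_l2 μ _ hmem
          _ ≤ ε := hξ k hk2
    _ = ((N - n : ℕ) : ℝ) * ε := by
        rw [Finset.sum_const, Nat.card_Ico, nsmul_eq_mul]
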